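/- Under the Poisson bracket on functions of (x_1,…,x_N, m_1,…,m_N, n_1,…,n_N) defined by {x_i, x_k} = sgn(x_i - x_k) and all other brackets among coordinates zero, the Hamiltonian H = 2∑_{1≤i<k≤N} m_i n_k e^{x_i - x_k} + ∑_{k=1}^N m_k n_k generates the flow ẋ_j = {x_j, H} = 2∑_{k<j} m_k n_j e^{x_k - x_j} + 2∑_{k>j} m_j n_k e^{x_j - x_k} + 4∑_{i<j<k} m_i n_k e^{x_i - x_k}, provided x_1 < x_2 < … < x_N. -/

import Mathlib

open Finset


lemma deriv_aux (N : ℕ) (x m n : Fin N → ℝ) (l : Fin N) :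
    HasDerivAt (fun s => 2 * ∑ i, ∑ k ∈ Finset.univ.filter (fun k => i < k),
        m i * n k * Real.exp (Function.update x l s i - Function.update x l s k)
        + ∑ k, m k * n k)
      (2 * (∑ k ∈ Finset.univ.filter (fun k => l < k), m l * n k * Real.exp (x l - x k)
          - ∑ i ∈ Finset.univ.filter (fun i => i < l), m i * n l * Real.exp (x i - x l)))
      (x l) := by
  classical
  set d : Fin N → Fin N → ℝ := fun i k =>
    if i = l then m i * n k * Real.exp (x i - x k)
    else if k = l then -(m i * n k * Real.exp (x i - x k)) else 0 with hd
  have hterm : ∀ i k : Fin N, i < k →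
      HasDerivAt (fun s => m i * n k *
        Real.exp (Function.update x l s i - Function.update x l s k)) (d i k) (x l) := by
    intro i k hik
    by_cases hi : i = l
    · subst hi
      have hk : k ≠ i := (ne_of_gt hik)
      have h1 : (fun s => m i * n k *
          Real.exp (Function.update x i s i - Function.update x i s k))
          = fun s => m i * n k * Real.exp (s - x k) := by
        funext s
        simp [Function.update_of_ne hk]
      rw [h1]
      have := (((hasDerivAt_id (x i)).sub_const (x k)).exp.const_mul (m i * n k))
      simpa [hd, hik.ne'] using this
    · by_cases hk : k = l
      · subst hk
        have h1 : (fun s => m i * n k *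
            Real.exp (Function.update x k s i - Function.update x k s k))
            = fun s => m i * n k * Real.exp (x i - s) := by
          funext s
          simp [Function.update_of_ne hi]
        rw [h1]
        have := (((hasDerivAt_id (x k)).const_sub (x i)).exp.const_mul (m i * n k))
        simpa [hd, hi, mul_comm] using this
      · have h1 : (fun s => m i * n k *
            Real.exp (Function.update x l s i - Function.update x l s k))
            = fun _ => m i * n k * Real.exp (x i - x k) := by
          funext s
          simp [Function.update_of_ne hi, Function.update_of_ne hk]
        rw [h1]
        simpa [hd, hi, hk] using hasDerivAt_const (x l) (m i * n k * Real.exp (x i - x k))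
  have hsum : HasDerivAt (fun s => ∑ i, ∑ k ∈ Finset.univ.filter (fun k => i < k),
        m i * n k * Real.exp (Function.update x l s i - Function.update x l s k))
      (∑ i, ∑ k ∈ Finset.univ.filter (fun k => i < k), d i k) (x l) := by
    apply HasDerivAt.fun_sum
    intro i _
    apply HasDerivAt.fun_sum
    intro k hk
    exact hterm i k (by simpa using hk)
  have hval : (∑ i, ∑ k ∈ Finset.univ.filter (fun k => i < k), d i k)
      = ∑ k ∈ Finset.univ.filter (fun k => l < k), m l * n k * Real.exp (x l - x k)
        - ∑ i ∈ Finset.univ.filter (fun i => i < l), m i * n l * Real.exp (x i - x l) := by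
      classical
      have h2 : ∀ i, (∑ k ∈ Finset.univ.filter (fun k => i < k), d i k) =
          (if i = l then ∑ k ∈ Finset.univ.filter (fun k => l < k),
              m l * n k * Real.exp (x l - x k) else 0)
          - (if i < l then m i * n l * Real.exp (x i - x l) else 0) := by
        intro i
        by_cases hi : i = l
        · subst hi
          simp only [hd, if_pos rfl, if_neg (lt_irrefl i), sub_zero]
          apply Finset.sum_congr rfl
          intro k hk
          simp
        · simp only [hd, if_neg hi, zero_sub]
          have : (∑ k ∈ Finset.univ.filter (fun k => i < k),
              if k = l then -(m i * n k * Real.exp (x i - x k)) else 0)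
              = if l ∈ Finset.univ.filter (fun k => i < k) then
                  -(m i * n l * Real.exp (x i - x l)) else 0 :=
            Finset.sum_ite_eq' _ l (fun k => -(m i * n k * Real.exp (x i - x k)))
          rw [this]
          by_cases hil : i < l <;> simp [hil]
      rw [Finset.sum_congr rfl (fun i _ => h2 i), Finset.sum_sub_distrib,
        Finset.sum_ite_eq' Finset.univ l, ← Finset.sum_filter]
      simp
  rw [hval] at hsum
  exact (hsum.const_mul 2).add_const _


lemma main_aux5 (N : ℕ) (x m n : Fin N → ℝ) (hx : StrictMono x) (j : Fin N) :
    ∑ l, Real.sign (x j - x l) *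
      (2 * (∑ k ∈ Finset.univ.filter (fun k => l < k), m l * n k * Real.exp (x l - x k)
          - ∑ i ∈ Finset.univ.filter (fun i => i < l), m i * n l * Real.exp (x i - x l)))
      = 2 * ∑ k ∈ Finset.univ.filter (fun k => k < j), m k * n j * Real.exp (x k - x j)
      + 2 * ∑ k ∈ Finset.univ.filter (fun k => j < k), m j * n k * Real.exp (x j - x k)
      + 4 * ∑ i ∈ Finset.univ.filter (fun i => i < j),
            ∑ k ∈ Finset.univ.filter (fun k => j < k),
              m i * n k * Real.exp (x i - x k) := by
  classical
  set E : Fin N → Fin N → ℝ := fun i k => m i * n k * Real.exp (x i - x k) with hE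
  set F : Fin N → Fin N → ℝ := fun a b => if a < b then E a b else 0 with hF
  set c : Fin N → ℝ := fun a => Real.sign (x j - x a) with hc
  have hcv : ∀ a, c a = if a < j then (1:ℝ) else if a = j then 0 else -1 := by
    intro a
    rcases lt_trichotomy a j with h | h | h
    · rw [if_pos h, hc]
      exact Real.sign_of_pos (sub_pos.mpr (hx h))
    · rw [if_neg (by simp [h]), if_pos h, hc, h]
      simp
    · rw [if_neg (not_lt_of_gt h), if_neg (ne_of_gt h), hc]
      exact Real.sign_of_neg (sub_neg.mpr (hx h))
  have key : ∀ a b : Fin N, (c a - c b) * F a b =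
      (if a < j ∧ b = j then E a b else 0)
      + (if a = j ∧ j < b then E a b else 0)
      + 2 * (if a < j ∧ j < b then E a b else 0) := by
    intro a b
    by_cases hab : a < b
    · rcases lt_trichotomy b j with hb | hb | hb
      · have ha : a < j := lt_trans hab hb
        simp only [hcv, hF, if_pos hab, if_pos ha, if_pos hb]
        rw [if_neg (by rintro ⟨_, rfl⟩; exact lt_irrefl b hb),
          if_neg (by rintro ⟨rfl, h2⟩; exact absurd hb (not_lt_of_gt h2)),
          if_neg (by rintro ⟨_, h2⟩; exact absurd hb (not_lt_of_gt h2))]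
        ring
      · subst hb
        simp [hcv, hF, hab, lt_irrefl, hab.ne]
      · rcases lt_trichotomy a j with ha | ha | ha
        · simp only [hcv, hF, if_pos hab, if_pos ha, if_neg (not_lt_of_gt hb),
            if_neg (ne_of_gt hb)]
          rw [if_neg (by rintro ⟨_, rfl⟩; exact lt_irrefl b hb),
            if_neg (by rintro ⟨rfl, _⟩; exact absurd ha (lt_irrefl a)),
            if_pos ⟨ha, hb⟩]
          ring
        · subst ha
          simp [hcv, hF, hab, lt_irrefl, hab.asymm, hab.ne']
        · simp only [hcv, hF, if_pos hab, if_neg (not_lt_of_gt ha), if_neg (ne_of_gt ha),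
            if_neg (not_lt_of_gt hb), if_neg (ne_of_gt hb)]
          rw [if_neg (by rintro ⟨h1, _⟩; exact absurd ha (not_lt_of_gt h1)),
            if_neg (by rintro ⟨rfl, _⟩; exact lt_irrefl a ha),
            if_neg (by rintro ⟨h1, _⟩; exact absurd ha (not_lt_of_gt h1))]
          ring
    · simp only [hF, if_neg hab]
      rw [if_neg (by rintro ⟨h1, rfl⟩; exact hab h1),
        if_neg (by rintro ⟨rfl, h2⟩; exact hab h2),
        if_neg (by rintro ⟨h1, h2⟩; exact hab (lt_trans h1 h2))]
      ring
  -- LHS = 2 * ∑ a, ∑ b, (c a - c b) * F a b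
  have hL : ∑ l, c l * (2 * (∑ k ∈ Finset.univ.filter (fun k => l < k), E l k
          - ∑ i ∈ Finset.univ.filter (fun i => i < l), E i l))
      = 2 * ∑ a, ∑ b, (c a - c b) * F a b := by
    have step1 : ∀ l, c l * (2 * (∑ k ∈ Finset.univ.filter (fun k => l < k), E l k
          - ∑ i ∈ Finset.univ.filter (fun i => i < l), E i l))
        = 2 * ((∑ b, c l * F l b) - (∑ a, c l * F a l)) := by
      intro l
      rw [Finset.sum_filter, Finset.sum_filter, ← Finset.mul_sum, ← Finset.mul_sum]
      simp only [mul_ite, mul_zero, hF]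
      ring
    rw [Finset.sum_congr rfl (fun l _ => step1 l), ← Finset.mul_sum,
      Finset.sum_sub_distrib, Finset.sum_comm (f := fun l a => c l * F a l)]
    rw [← Finset.sum_sub_distrib]
    congr 1
    apply Finset.sum_congr rfl
    intro a _
    rw [← Finset.sum_sub_distrib]
    apply Finset.sum_congr rfl
    intro b _
    ring
  rw [hL, Finset.sum_congr rfl (fun a _ => Finset.sum_congr rfl (fun b _ => key a b))]
  have split : ∑ a, ∑ b, ((if a < j ∧ b = j then E a b else 0)
      + (if a = j ∧ j < b then E a b else 0)
      + 2 * (if a < j ∧ j < b then E a b else 0))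
      = (∑ a, ∑ b, (if a < j ∧ b = j then E a b else 0))
      + (∑ a, ∑ b, (if a = j ∧ j < b then E a b else 0))
      + (∑ a, ∑ b, 2 * (if a < j ∧ j < b then E a b else 0)) := by
    simp [Finset.sum_add_distrib]
  rw [split]
  -- now compute the three double sums
  have s1 : ∑ a, ∑ b, (if a < j ∧ b = j then E a b else 0)
      = ∑ k ∈ Finset.univ.filter (fun k => k < j), E k j := by
    rw [Finset.sum_filter]
    apply Finset.sum_congr rfl
    intro a _
    by_cases ha : a < j
    · simp [ha, Finset.sum_ite_eq']
    · simp [ha]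
  have s2 : ∑ a, ∑ b, (if a = j ∧ j < b then E a b else 0)
      = ∑ k ∈ Finset.univ.filter (fun k => j < k), E j k := by
    have : ∀ a, ∑ b, (if a = j ∧ j < b then E a b else 0)
        = if a = j then (∑ b, if j < b then E a b else 0) else 0 := by
      intro a
      by_cases ha : a = j
      · simp [ha]
      · simp [ha]
    rw [Finset.sum_congr rfl (fun a _ => this a), Finset.sum_ite_eq' Finset.univ j,
      if_pos (Finset.mem_univ j), Finset.sum_filter]
  have s3 : ∑ a, ∑ b, 2 * (if a < j ∧ j < b then E a b else 0)
      = 2 * ∑ i ∈ Finset.univ.filter (fun i => i < j),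
            ∑ k ∈ Finset.univ.filter (fun k => j < k), E i k := by
    have inner : ∀ a, ∑ b, 2 * (if a < j ∧ j < b then E a b else 0)
        = if a < j then 2 * ∑ k ∈ Finset.univ.filter (fun k => j < k), E a k else 0 := by
      intro a
      by_cases ha : a < j <;> simp [ha, Finset.mul_sum, Finset.sum_filter]
    rw [Finset.sum_congr rfl (fun a _ => inner a), ← Finset.sum_filter, ← Finset.mul_sum]
  rw [s1, s2, s3]
  ring


/-- The Hamiltonian `H = 2∑_{i<k} m_i n_k e^{x_i - x_k} + ∑_k m_k n_k` generates the flow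
`ẋ_j = {x_j, H} = ∑_k sgn(x_j - x_k) ∂H/∂x_k
  = 2∑_{k<j} m_k n_j e^{x_k-x_j} + 2∑_{k>j} m_j n_k e^{x_j-x_k} + 4∑_{i<j<k} m_i n_k e^{x_i-x_k}`,
provided `x_1 < x_2 < … < x_N`. -/
theorem stmt5 (N : ℕ) (x m n : Fin N → ℝ)
    (hm : ∀ i, 0 < m i) (hn : ∀ i, 0 < n i)
    (hx : StrictMono x) (j : Fin N)
    (H : (Fin N → ℝ) → ℝ)
    (hH : H = fun y => 2 * ∑ i, ∑ k ∈ Finset.univ.filter (fun k => i < k),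
        m i * n k * Real.exp (y i - y k) + ∑ k, m k * n k) :
    ∑ k, Real.sign (x j - x k) * deriv (fun s => H (Function.update x k s)) (x k)
      = 2 * ∑ k ∈ Finset.univ.filter (fun k => k < j), m k * n j * Real.exp (x k - x j)
      + 2 * ∑ k ∈ Finset.univ.filter (fun k => j < k), m j * n k * Real.exp (x j - x k)
      + 4 * ∑ i ∈ Finset.univ.filter (fun i => i < j),
            ∑ k ∈ Finset.univ.filter (fun k => j < k),
              m i * n k * Real.exp (x i - x k) := by
  have hD : ∀ l : Fin N, deriv (fun s => H (Function.update x l s)) (x l)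
      = 2 * (∑ k ∈ Finset.univ.filter (fun k => l < k), m l * n k * Real.exp (x l - x k)
          - ∑ i ∈ Finset.univ.filter (fun i => i < l), m i * n l * Real.exp (x i - x l)) := by
    intro l
    subst hH
    exact (deriv_aux N x m n l).deriv
  rw [Finset.sum_congr rfl (fun l _ => by rw [hD l])]
  exact main_aux5 N x m n hx j
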